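/- Let X be a compact metric space, let m be a Borel probability measure on X, let (x_n)_{n≥1} be a sequence in X equidistributed with respect to m, and let f : X → ℝ be a function whose set of discontinuity points has m-measure zero. For t ∈ ℝ set A_t = { n ≥ 1 : f(x_n) = t }, and let F be the σ-algebra on the index set ℕ generated by the sets { A_t : t ∈ ℝ }. Suppose that every set in F has a natural density and that natural density is countably additive on F (so that it defines a probability measure on (ℕ, F)). Then there exists a countable set T ⊆ ℝ such that m(f⁻¹(T)) = 1; equivalently, there are countably many pairwise disjoint Borel sets B_1, B_2, … ⊆ X whose union has m-measure 1 and real numbers c_1, c_2, … such that f is constantly equal to c_j on B_j for each j. -/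

import Mathlib

open MeasureTheory Filter Set

/-- A subset `s ⊆ ℕ` has natural density `d` if the proportion of `n < N` lying in `s`
tends to `d` as `N → ∞`. -/
def hasNatDensity (s : Set ℕ) (d : ℝ) : Prop :=
  Filter.Tendsto
    (fun N : ℕ => (∑ n ∈ Finset.range N, Set.indicator s (fun _ => (1 : ℝ)) n) / N)
    Filter.atTop (nhds d)

namespace Stmt14Aux
open scoped Classical

lemma div_cast_mono {a b : ℝ} (h : a ≤ b) (N : ℕ) : a / N ≤ b / N := by
  rcases Nat.eq_zero_or_pos N with h0 | h0
  · simp [h0]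
  · exact (div_le_div_iff_of_pos_right (by exact_mod_cast h0)).2 h

lemma density_nonneg {s : Set ℕ} {d : ℝ} (h : hasNatDensity s d) : 0 ≤ d := by
  refine ge_of_tendsto' h fun N => ?_
  apply div_nonneg _ (Nat.cast_nonneg N)
  exact Finset.sum_nonneg fun n _ => Set.indicator_nonneg (fun _ _ => zero_le_one) n

lemma density_mono {s t : Set ℕ} {d e : ℝ} (hst : s ⊆ t)
    (hs : hasNatDensity s d) (ht : hasNatDensity t e) : d ≤ e := by
  refine le_of_tendsto_of_tendsto' hs ht fun N => ?_
  refine div_cast_mono (Finset.sum_le_sum fun n _ => ?_) N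
  exact Set.indicator_le_indicator_of_subset hst (fun _ => zero_le_one) n

lemma density_empty : hasNatDensity (∅ : Set ℕ) 0 := by
  have h : ∀ N : ℕ,
      (∑ n ∈ Finset.range N, Set.indicator (∅ : Set ℕ) (fun _ => (1 : ℝ)) n) / N = 0 := by
    intro N; simp
  exact Filter.Tendsto.congr (fun N => (h N).symm) tendsto_const_nhds

lemma density_univ : hasNatDensity (Set.univ : Set ℕ) 1 := by
  have h : ∀ N : ℕ, 1 ≤ N →
      (∑ n ∈ Finset.range N, Set.indicator (Set.univ : Set ℕ) (fun _ => (1 : ℝ)) n) / N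
        = 1 := by
    intro N hN
    have hN' : (N : ℝ) ≠ 0 := Nat.cast_ne_zero.2 (by omega)
    simp [Set.indicator_univ, div_self hN']
  refine Tendsto.congr' ?_ tendsto_const_nhds
  filter_upwards [eventually_ge_atTop 1] with N hN
  exact (h N hN).symm

/-- Disjointification of a sequence of sets. -/
def dj {α : Type*} (g : ℕ → Set α) (n : ℕ) : Set α := g n \ ⋃ j ∈ Finset.range n, g j

lemma mem_dj {α : Type*} {g : ℕ → Set α} {n : ℕ} {a : α} :
    a ∈ dj g n ↔ a ∈ g n ∧ ∀ j < n, a ∉ g j := by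
  simp [dj]

lemma dj_subset {α : Type*} (g : ℕ → Set α) (n : ℕ) : dj g n ⊆ g n := Set.diff_subset

lemma iUnion_dj {α : Type*} (g : ℕ → Set α) : (⋃ n, dj g n) = ⋃ n, g n := by
  refine subset_antisymm (Set.iUnion_mono fun n => dj_subset g n) fun a ha => ?_
  obtain ⟨n, hn⟩ := Set.mem_iUnion.1 ha
  have hex : ∃ n, a ∈ g n := ⟨n, hn⟩
  exact Set.mem_iUnion.2 ⟨Nat.find hex, mem_dj.2 ⟨Nat.find_spec hex,
    fun j hj => Nat.find_min hex hj⟩⟩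

lemma dj_disjoint {α : Type*} (g : ℕ → Set α) : Pairwise (Function.onFun Disjoint (dj g)) := by
  have key : ∀ i j : ℕ, i < j → Disjoint (dj g i) (dj g j) := by
    intro i j hij
    refine Set.disjoint_left.2 fun a hai haj => ?_
    exact (mem_dj.1 haj).2 i hij (dj_subset g i hai)
  intro i j hij
  rcases lt_or_gt_of_ne hij with h | h
  · exact key i j h
  · exact (key j i h).symm

lemma dj_measurable {α : Type*} [MeasurableSpace α] {g : ℕ → Set α}
    (hg : ∀ n, MeasurableSet (g n)) (n : ℕ) : MeasurableSet (dj g n) :=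
  (hg n).diff (Finset.measurableSet_biUnion _ fun j _ => hg j)

lemma dj_eq_empty {α : Type*} {g : ℕ → Set α} {n : ℕ} (h : ∃ j < n, g n = g j) :
    dj g n = ∅ := by
  obtain ⟨j, hj, hgj⟩ := h
  refine Set.eq_empty_iff_forall_notMem.2 fun a ha => ?_
  exact (mem_dj.1 ha).2 j hj (hgj ▸ (mem_dj.1 ha).1)

lemma dj_eq_self {α : Type*} {g : ℕ → Set α} {n : ℕ}
    (h : ∀ j < n, Disjoint (g j) (g n)) : dj g n = g n := by
  refine subset_antisymm (dj_subset g n) fun a ha => mem_dj.2 ⟨ha, fun j hj haj => ?_⟩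
  exact Set.disjoint_left.1 (h j hj) haj ha

lemma density_le_closed {X : Type*} [MetricSpace X] [CompactSpace X]
    [MeasurableSpace X] [BorelSpace X]
    (m : Measure X) [IsProbabilityMeasure m] (x : ℕ → X)
    (hequi : ∀ g : X → ℝ, Continuous g →
      Filter.Tendsto (fun N : ℕ => (∑ n ∈ Finset.range N, g (x n)) / N)
        Filter.atTop (nhds (∫ y, g y ∂m)))
    {K : Set X} (hK : IsClosed K) {s : Set ℕ} (hs : ∀ n ∈ s, x n ∈ K)
    {d : ℝ} (hd : hasNatDensity s d) : d ≤ (m K).toReal := by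
  refine le_of_forall_pos_le_add fun ε hε => ?_
  obtain ⟨U, hKU, hUopen, hU⟩ := Set.exists_isOpen_lt_add K (measure_ne_top m K)
    (ε := ENNReal.ofReal ε) (ENNReal.ofReal_pos.2 hε).ne'
  obtain ⟨g, hg0, hg1, hg01⟩ := exists_continuous_zero_one_of_isClosed
    hUopen.isClosed_compl hK (Set.disjoint_compl_left_iff_subset.2 hKU)
  have hgle : d ≤ ∫ y, g y ∂m := by
    refine le_of_tendsto_of_tendsto' hd (hequi g g.continuous) fun N => ?_
    refine div_cast_mono (Finset.sum_le_sum fun n _ => ?_) N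
    by_cases hn : n ∈ s
    · have : g (x n) = 1 := hg1 (hs n hn)
      simp [hn, this]
    · simpa [hn] using (hg01 (x n)).1
  have hgK : HasCompactSupport (⇑g) := (isClosed_tsupport _).isCompact
  have hgint : Integrable (⇑g) m := g.continuous.integrable_of_hasCompactSupport hgK
  have hiint : Integrable (U.indicator fun _ => (1 : ℝ)) m :=
    (integrable_const (1 : ℝ)).indicator hUopen.measurableSet
  have hle : ∫ y, g y ∂m ≤ ∫ y, U.indicator (fun _ => (1 : ℝ)) y ∂m := by
    refine integral_mono hgint hiint fun y => ?_
    by_cases hy : y ∈ U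
    · simpa [hy] using (hg01 y).2
    · have : g y = 0 := hg0 hy
      simp [hy, this]
  have hieq : ∫ y, U.indicator (fun _ => (1 : ℝ)) y ∂m = (m U).toReal := by
    rw [integral_indicator_const (1 : ℝ) hUopen.measurableSet]; simp; rfl
  have hUle : (m U).toReal ≤ (m K).toReal + ε := by
    have h1 : m U ≤ m K + ENNReal.ofReal ε := hU.le
    have h2 : (m K + ENNReal.ofReal ε).toReal = (m K).toReal + ε := by
      rw [ENNReal.toReal_add (measure_ne_top m K) ENNReal.ofReal_ne_top,
        ENNReal.toReal_ofReal hε.le]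
    calc (m U).toReal ≤ (m K + ENNReal.ofReal ε).toReal :=
          ENNReal.toReal_mono (by finiteness) h1
      _ = (m K).toReal + ε := h2
  calc d ≤ ∫ y, g y ∂m := hgle
    _ ≤ (m U).toReal := hieq ▸ hle
    _ ≤ (m K).toReal + ε := hUle

end Stmt14Aux
theorem stmt14 {X : Type*} [MetricSpace X] [CompactSpace X]
    [MeasurableSpace X] [BorelSpace X]
    (m : MeasureTheory.Measure X) [MeasureTheory.IsProbabilityMeasure m]
    (x : ℕ → X)
    (hequi : ∀ g : X → ℝ, Continuous g →
      Filter.Tendsto (fun N : ℕ => (∑ n ∈ Finset.range N, g (x n)) / N)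
        Filter.atTop (nhds (∫ y, g y ∂m)))
    (f : X → ℝ)
    (hf : m {y : X | ¬ ContinuousAt f y} = 0)
    (F : MeasurableSpace ℕ)
    (hF : F = MeasurableSpace.generateFrom
      {s : Set ℕ | ∃ t : ℝ, s = {n : ℕ | f (x n) = t}})
    (hdens : ∀ s : Set ℕ, @MeasurableSet ℕ F s → ∃ d : ℝ, hasNatDensity s d)
    (hadd : ∀ B : ℕ → Set ℕ, (∀ i, @MeasurableSet ℕ F (B i)) →
      Pairwise (Function.onFun Disjoint B) →
      ∀ (d : ℕ → ℝ) (D : ℝ), (∀ i, hasNatDensity (B i) (d i)) →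
        hasNatDensity (⋃ i, B i) D → D = ∑' i, d i) :
    ∃ T : Set ℝ, T.Countable ∧ m (f ⁻¹' T) = 1 := by
  classical
  open Stmt14Aux in
  set C : Set X := {y : X | ContinuousAt f y} with hCdef
  have hCmeas : MeasurableSet C := (IsGδ.setOf_continuousAt f).measurableSet
  have hCc : m Cᶜ = 0 := by
    have : Cᶜ = {y : X | ¬ ContinuousAt f y} := by ext y; simp [hCdef]
    rw [this]; exact hf
  have hgen : ∀ t : ℝ, MeasurableSet[F] {n : ℕ | f (x n) = t} := fun t => by
    rw [hF]; exact MeasurableSpace.measurableSet_generateFrom ⟨t, rfl⟩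
  -- fibers of f restricted to continuity points
  set Fib : ℝ → Set X := fun t => closure (f ⁻¹' {t}) ∩ C with hFibdef
  have hFibMeas : ∀ t, MeasurableSet (Fib t) := fun t =>
    isClosed_closure.measurableSet.inter hCmeas
  have hFibSub : ∀ t, Fib t ⊆ f ⁻¹' {t} := by
    intro t y hy
    have h1 : f y ∈ closure (f '' (f ⁻¹' {t})) := mem_closure_image hy.2 hy.1
    have h2 : closure (f '' (f ⁻¹' {t})) ⊆ {t} := by
      have := closure_mono (Set.image_preimage_subset f {t})
      simpa [closure_singleton] using this
    exact h2 h1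
  have hFibDisj : ∀ s t : ℝ, s ≠ t → Disjoint (Fib s) (Fib t) := by
    intro s t hst
    refine Set.disjoint_left.2 fun y hys hyt => hst ?_
    have h1 : f y = s := hFibSub s hys
    have h2 : f y = t := hFibSub t hyt
    rw [← h1, ← h2]
  -- key: the density of a level set is at most the mass of its fiber
  have hkey : ∀ (t : ℝ) (d : ℝ), hasNatDensity {n : ℕ | f (x n) = t} d →
      d ≤ (m (Fib t)).toReal := by
    intro t d hd
    have h1 : d ≤ (m (closure (f ⁻¹' {t}))).toReal :=
      density_le_closed m x hequi isClosed_closure (fun n hn => subset_closure hn) hd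
    have h2 : m (closure (f ⁻¹' {t})) ≤ m (Fib t) := by
      calc m (closure (f ⁻¹' {t}))
          ≤ m (closure (f ⁻¹' {t}) ∩ C) + m (closure (f ⁻¹' {t}) \ C) :=
            measure_le_inter_add_diff m _ C
        _ ≤ m (Fib t) + m Cᶜ :=
            add_le_add le_rfl (measure_mono fun y hy => hy.2)
        _ = m (Fib t) := by rw [hCc, add_zero]
    exact h1.trans (ENNReal.toReal_mono (measure_ne_top m _) h2)
  -- the countable set of atoms
  set T : Set ℝ := {t : ℝ | 0 < m (Fib t)} with hTdef
  have hTc : T.Countable :=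
    MeasureTheory.Measure.countable_meas_pos_of_disjoint_iUnion hFibMeas
      (fun s t hst => hFibDisj s t hst)
  obtain ⟨u, hu⟩ := (hTc.insert (f (x 0))).exists_eq_range ⟨_, Set.mem_insert _ _⟩
  have hTu : T ⊆ Set.range u := hu ▸ Set.subset_insert _ _
  -- level sets indexed by ℕ
  set G : ℕ → Set ℕ := fun i => {n : ℕ | f (x n) = u i} with hGdef
  have hGmeas : ∀ i, MeasurableSet[F] (G i) := fun i => hgen (u i)
  have hDmeas : ∀ i, MeasurableSet[F] (dj G i) := fun i => dj_measurable hGmeas i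
  set S : Set ℕ := {n : ℕ | f (x n) ∉ Set.range u} with hSdef
  have hSeq : S = (⋃ i, G i)ᶜ := by
    ext n
    simp [hSdef, hGdef, Set.mem_range, eq_comm]
  have hSmeas : MeasurableSet[F] S := by
    rw [hSeq]; exact (MeasurableSet.iUnion hGmeas).compl
  obtain ⟨dS, hdS⟩ := hdens S hSmeas
  -- the set S has density zero
  have hdS0 : dS = 0 := by
    set Cn : ℕ → Set ℕ := fun n => {k : ℕ | f (x k) = f (x n)} ∩ S with hCndef
    have hCnMeas : ∀ n, MeasurableSet[F] (Cn n) := fun n => (hgen _).inter hSmeas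
    have hCnSubS : ∀ n, Cn n ⊆ S := fun n => Set.inter_subset_right
    have hUCn : (⋃ n, Cn n) = S := by
      refine subset_antisymm (Set.iUnion_subset hCnSubS) fun n hn => ?_
      exact Set.mem_iUnion.2 ⟨n, ⟨rfl, hn⟩⟩
    have hCnd : ∀ (n : ℕ) (e : ℝ), hasNatDensity (Cn n) e → e = 0 := by
      intro n e he
      by_cases h : f (x n) ∈ Set.range u
      · have hemp : Cn n = ∅ := by
          refine Set.eq_empty_iff_forall_notMem.2 fun k hk => ?_
          have hk2 : f (x k) ∉ Set.range u := hk.2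
          have hk1 : f (x k) = f (x n) := hk.1
          exact hk2 (by rw [hk1]; exact h)
        rw [hemp] at he
        exact tendsto_nhds_unique he density_empty
      · obtain ⟨e', he'⟩ := hdens {k : ℕ | f (x k) = f (x n)} (hgen _)
        have h1 : e ≤ e' := density_mono Set.inter_subset_left he he'
        have hb : e' ≤ (m (Fib (f (x n)))).toReal := hkey _ e' he'
        have hzero : m (Fib (f (x n))) = 0 := by
          by_contra h0
          exact h (hTu (pos_iff_ne_zero.2 h0))
        have h3 := density_nonneg he
        rw [hzero] at hb
        simp at hb
        linarith
    have hDCmeas : ∀ n, MeasurableSet[F] (dj Cn n) := fun n => dj_measurable hCnMeas n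
    choose dc hdc using fun n => hdens _ (hDCmeas n)
    have hdc0 : ∀ n, dc n = 0 := by
      intro n
      obtain ⟨e, he⟩ := hdens (Cn n) (hCnMeas n)
      have h1 : dc n ≤ e := density_mono (dj_subset Cn n) (hdc n) he
      have h2 := hCnd n e he
      have h3 := density_nonneg (hdc n)
      linarith
    have := hadd (dj Cn) hDCmeas (dj_disjoint Cn) dc dS (hdc)
      (by rw [iUnion_dj, hUCn]; exact hdS)
    simpa [hdc0] using this
  -- the main countable family
  choose dG hdG using fun i => hdens (dj G i) (hDmeas i)
  set B : ℕ → Set ℕ := fun i => Nat.casesOn i S (dj G) with hBdef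
  have hBmeas : ∀ i, MeasurableSet[F] (B i) := by
    intro i; cases i with
    | zero => exact hSmeas
    | succ j => exact hDmeas j
  have hSD : ∀ k, Disjoint S (dj G k) := by
    intro k
    refine Set.disjoint_left.2 fun n hnS hnD => ?_
    exact hnS ⟨k, (dj_subset G k hnD).symm⟩
  have hBdisj : Pairwise (Function.onFun Disjoint B) := by
    intro i j hij
    cases i with
    | zero => cases j with
      | zero => exact absurd rfl hij
      | succ b => exact hSD b
    | succ a => cases j with
      | zero => exact (hSD a).symm
      | succ b => exact dj_disjoint G (fun h => hij (by rw [h]))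
  set dB : ℕ → ℝ := fun i => Nat.casesOn i dS dG with hdBdef
  have hBd : ∀ i, hasNatDensity (B i) (dB i) := by
    intro i; cases i with
    | zero => exact hdS
    | succ j => exact hdG j
  have hBunion : (⋃ i, B i) = Set.univ := by
    refine Set.eq_univ_of_forall fun n => ?_
    by_cases h : f (x n) ∈ Set.range u
    · obtain ⟨i, hi⟩ := h
      have hmem : n ∈ ⋃ k, dj G k := by
        rw [iUnion_dj]
        exact Set.mem_iUnion.2 ⟨i, hi.symm⟩
      obtain ⟨k, hk⟩ := Set.mem_iUnion.1 hmem
      exact Set.mem_iUnion.2 ⟨k + 1, hk⟩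
    · exact Set.mem_iUnion.2 ⟨0, h⟩
  have h1 : (1 : ℝ) = ∑' i, dB i :=
    hadd B hBmeas hBdisj dB 1 hBd (by rw [hBunion]; exact density_univ)
  have hsum : Summable dB := by
    by_contra hc
    rw [tsum_eq_zero_of_not_summable hc] at h1
    norm_num at h1
  have h2 : (1 : ℝ) = ∑' i, dG i := by
    rw [h1, Summable.tsum_eq_zero_add hsum]
    have h0 : dB 0 = 0 := hdS0
    have hs : ∀ i : ℕ, dB (i + 1) = dG i := fun i => rfl
    simp [h0, hs]
  -- the measure-side disjointified fibers
  set E : ℕ → Set X := dj (fun i => Fib (u i)) with hEdef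
  have hEmeas : ∀ i, MeasurableSet (E i) := fun i =>
    dj_measurable (fun j => hFibMeas (u j)) i
  have hEdisj : Pairwise (Function.onFun Disjoint E) := dj_disjoint _
  have hterm : ∀ i, dG i ≤ (m (E i)).toReal := by
    intro i
    by_cases h : ∃ j < i, u j = u i
    · obtain ⟨j, hj, hju⟩ := h
      have hGe : dj G i = ∅ := dj_eq_empty ⟨j, hj, by simp [hGdef, hju]⟩
      have : dG i = 0 := tendsto_nhds_unique (hGe ▸ hdG i) density_empty
      rw [this]; exact ENNReal.toReal_nonneg
    · push_neg at h
      have hEe : E i = Fib (u i) := dj_eq_self (fun j hj => hFibDisj _ _ (h j hj))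
      obtain ⟨e, he⟩ := hdens (G i) (hGmeas i)
      have hm1 : dG i ≤ e := density_mono (dj_subset G i) (hdG i) he
      have hm2 : e ≤ (m (Fib (u i))).toReal := hkey (u i) e he
      rw [hEe]; linarith
  have hsumG : Summable dG := by
    have := (summable_nat_add_iff 1).2 hsum
    exact this
  have hmE_ne : (∑' i, m (E i)) ≠ ⊤ := by
    rw [← measure_iUnion hEdisj hEmeas]
    exact measure_ne_top m _
  have hsumE : Summable fun i => (m (E i)).toReal := ENNReal.summable_toReal hmE_ne
  have h3 : ∑' i, dG i ≤ ∑' i, (m (E i)).toReal := Summable.tsum_le_tsum hterm hsumG hsumE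
  have h4 : ∑' i, (m (E i)).toReal = (m (⋃ i, E i)).toReal := by
    rw [← ENNReal.tsum_toReal_eq (fun i => measure_ne_top m _),
      ← measure_iUnion hEdisj hEmeas]
  have h5 : (⋃ i, E i) ⊆ f ⁻¹' (Set.range u) := by
    rw [hEdef, iUnion_dj]
    refine Set.iUnion_subset fun i y hy => ?_
    exact ⟨i, (hFibSub (u i) hy).symm⟩
  have h6 : (1 : ℝ) ≤ (m (f ⁻¹' (Set.range u))).toReal := by
    calc (1 : ℝ) = ∑' i, dG i := h2
      _ ≤ ∑' i, (m (E i)).toReal := h3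
      _ = (m (⋃ i, E i)).toReal := h4
      _ ≤ (m (f ⁻¹' (Set.range u))).toReal :=
          ENNReal.toReal_mono (measure_ne_top m _) (measure_mono h5)
  refine ⟨Set.range u, Set.countable_range u, ?_⟩
  have h7 : (m (f ⁻¹' (Set.range u))).toReal ≤ 1 := by
    have := MeasureTheory.prob_le_one (μ := m) (s := f ⁻¹' (Set.range u))
    simpa using ENNReal.toReal_mono ENNReal.one_ne_top this
  exact (ENNReal.toReal_eq_one_iff _).1 (le_antisymm h7 h6)
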